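/- Let G' be a graph, let x be an optimal first move for Dominator in the Dominator-start domination game on G' (so γ_g(G') is achieved when Dominator starts at x), and let G be obtained from G' by attaching a pendant leaf v to x. Then γ_g(G) = γ_g(G') = γ_g(G−v). -/
import Mathlib


open Classical

noncomputable section

namespace DomGame

variable {V : Type*} [Fintype V]

/-- Closed neighborhood of `v` as a `Finset`. -/
noncomputable def N (G : SimpleGraph V) (v : V) : Finset V :=
  Finset.univ.filter (fun u => G.Adj v u ∨ u = v)

/-- Legal moves given the set `S` of already dominated vertices. -/
noncomputable def moves (G : SimpleGraph V) (S : Finset V) : Finset V :=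
  Finset.univ.filter (fun v => ¬ N G v ⊆ S)

lemma card_lt {G : SimpleGraph V} {S : Finset V} (v : V) (hv : v ∈ moves G S) :
    (Finset.univ \ (S ∪ N G v)).card < (Finset.univ \ S).card := by
  simp only [moves, Finset.mem_filter] at hv
  obtain ⟨u, hu, hus⟩ := Finset.not_subset.mp hv.2
  apply Finset.card_lt_card
  refine ⟨Finset.sdiff_subset_sdiff (le_refl _) Finset.subset_union_left, ?_⟩
  intro hsub
  have := hsub (Finset.mem_sdiff.mpr ⟨Finset.mem_univ u, hus⟩)
  rw [Finset.mem_sdiff, Finset.mem_union] at this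
  exact this.2 (Or.inr hu)

mutual
/-- Number of moves with optimal play when it is Dominator's turn and
`S` is the set of already dominated vertices. -/
noncomputable def gameD (G : SimpleGraph V) (S : Finset V) : ℕ :=
  if h : (moves G S).Nonempty then
    1 + (moves G S).attach.inf' (by simpa using h)
      (fun v => gameS G (S ∪ N G v.1))
  else 0
termination_by (Finset.univ \ S).card
decreasing_by exact card_lt v.1 v.2

/-- Number of moves with optimal play when it is Staller's turn. -/
noncomputable def gameS (G : SimpleGraph V) (S : Finset V) : ℕ :=
  if h : (moves G S).Nonempty then
    1 + (moves G S).attach.sup' (by simpa using h)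
      (fun v => gameD G (S ∪ N G v.1))
  else 0
termination_by (Finset.univ \ S).card
decreasing_by exact card_lt v.1 v.2
end

/-- The (Dominator-start) game domination number. -/
noncomputable def gammaG (G : SimpleGraph V) : ℕ := gameD G ∅

/-- The Staller-start game domination number. -/
noncomputable def gammaG' (G : SimpleGraph V) : ℕ := gameS G ∅

end DomGame

open DomGame

/-- The graph obtained from `G'` by attaching a pendant leaf (the vertex
`inr ()`) to the vertex `x`. -/
noncomputable def addLeaf {V : Type*} (G' : SimpleGraph V) (x : V) :
    SimpleGraph (V ⊕ Unit) :=
  SimpleGraph.fromRel (fun a b =>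
    match a, b with
    | Sum.inl u, Sum.inl w => G'.Adj u w
    | Sum.inl u, Sum.inr _ => u = x
    | _, _ => False)

namespace DomGame

variable {V : Type*} [Fintype V] {G : SimpleGraph V} {S : Finset V}

lemma mem_N {u v : V} : u ∈ N G v ↔ G.Adj v u ∨ u = v := by
  simp [N]

lemma self_mem_N (v : V) : v ∈ N G v := mem_N.mpr (Or.inr rfl)

lemma mem_moves {v : V} : v ∈ moves G S ↔ ¬ N G v ⊆ S := by
  simp [moves]

lemma gameD_eq_zero (h : ¬ (moves G S).Nonempty) : gameD G S = 0 := by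
  rw [gameD]; simp [h]

lemma gameS_eq_zero (h : ¬ (moves G S).Nonempty) : gameS G S = 0 := by
  rw [gameS]; simp [h]

lemma gameD_le {v : V} (hv : v ∈ moves G S) :
    gameD G S ≤ 1 + gameS G (S ∪ N G v) := by
  rw [gameD]
  have h : (moves G S).Nonempty := ⟨v, hv⟩
  rw [dif_pos h]
  have : (moves G S).attach.inf' (by simpa using h) (fun w => gameS G (S ∪ N G w.1))
      ≤ gameS G (S ∪ N G v) :=
    Finset.inf'_le (fun w : {y // y ∈ moves G S} => gameS G (S ∪ N G w.1))
      (Finset.mem_attach _ ⟨v, hv⟩)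
  omega

lemma gameS_ge {v : V} (hv : v ∈ moves G S) :
    1 + gameD G (S ∪ N G v) ≤ gameS G S := by
  rw [gameS]
  have h : (moves G S).Nonempty := ⟨v, hv⟩
  rw [dif_pos h]
  have : gameD G (S ∪ N G v) ≤ (moves G S).attach.sup' (by simpa using h)
      (fun w => gameD G (S ∪ N G w.1)) :=
    Finset.le_sup' (fun w : {y // y ∈ moves G S} => gameD G (S ∪ N G w.1))
      (Finset.mem_attach _ ⟨v, hv⟩)
  omega

lemma gameD_spec (h : (moves G S).Nonempty) :
    ∃ v ∈ moves G S, gameD G S = 1 + gameS G (S ∪ N G v) := by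
  rw [gameD, dif_pos h]
  obtain ⟨⟨v, hv⟩, _, he⟩ := Finset.exists_mem_eq_inf' (s := (moves G S).attach) (by simpa using h)
    (fun w : {y // y ∈ moves G S} => gameS G (S ∪ N G w.1))
  exact ⟨v, hv, by rw [he]⟩

lemma gameS_spec (h : (moves G S).Nonempty) :
    ∃ v ∈ moves G S, gameS G S = 1 + gameD G (S ∪ N G v) := by
  rw [gameS, dif_pos h]
  obtain ⟨⟨v, hv⟩, _, he⟩ := Finset.exists_mem_eq_sup' (s := (moves G S).attach) (by simpa using h)
    (fun w : {y // y ∈ moves G S} => gameD G (S ∪ N G w.1))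
  exact ⟨v, hv, by rw [he]⟩

end DomGame
namespace DomGame

variable {V : Type*} [Fintype V] {G : SimpleGraph V}

lemma moves_subset_mono {S T : Finset V} (hST : S ⊆ T) : moves G T ⊆ moves G S := by
  intro v hv
  rw [mem_moves] at hv ⊢
  exact fun h => hv (h.trans hST)

lemma cp_aux (G : SimpleGraph V) :
    ∀ n : ℕ, ∀ S T : Finset V, (Finset.univ \ S).card ≤ n → S ⊆ T →
      gameD G T ≤ gameD G S ∧ gameS G T ≤ gameS G S := by
  intro n
  induction n with
  | zero =>
    intro S T hc hST
    have hc0 : (Finset.univ \ S : Finset V) = ∅ := Finset.card_eq_zero.mp (by omega)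
    have hS : moves G S = ∅ := by
      ext v
      simp only [mem_moves, Finset.notMem_empty, iff_false, not_not]
      intro u _
      by_contra hu
      have : u ∈ Finset.univ \ S := Finset.mem_sdiff.mpr ⟨Finset.mem_univ u, hu⟩
      simp [hc0] at this
    have hT : moves G T = ∅ :=
      Finset.eq_empty_of_forall_notMem fun v hv =>
        (by simp [hS] : v ∉ moves G S) (moves_subset_mono hST hv)
    rw [gameD_eq_zero (by simp [hS, hT]), gameD_eq_zero (by simp [hS, hT]),
      gameS_eq_zero (by simp [hS, hT]), gameS_eq_zero (by simp [hS, hT])]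
    exact ⟨le_refl _, le_refl _⟩
  | succ n ih =>
    intro S T hc hST
    constructor
    · -- gameD G T ≤ gameD G S
      by_cases hS : (moves G S).Nonempty
      · by_cases hT : (moves G T).Nonempty
        · obtain ⟨m', hm', heq⟩ := gameD_spec hT
          obtain ⟨m, hm, heqS⟩ := gameD_spec hS
          rw [heqS]
          by_cases hmT : m ∈ moves G T
          · calc gameD G T ≤ 1 + gameS G (T ∪ N G m) := gameD_le hmT
              _ ≤ 1 + gameS G (S ∪ N G m) := by
                have := (ih (S ∪ N G m) (T ∪ N G m)
                  (by have := card_lt m hm; omega)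
                  (Finset.union_subset_union hST (le_refl _))).2
                omega
          · have hNm : N G m ⊆ T := by
              rw [mem_moves, not_not] at hmT; exact hmT
            calc gameD G T ≤ 1 + gameS G (T ∪ N G m') := gameD_le hm'
              _ ≤ 1 + gameS G (S ∪ N G m) := by
                have := (ih (S ∪ N G m) (T ∪ N G m')
                  (by have := card_lt m hm; omega)
                  (Finset.union_subset (hST.trans Finset.subset_union_left)
                    (hNm.trans Finset.subset_union_left))).2
                omega
        · rw [gameD_eq_zero hT]; exact Nat.zero_le _
      · have hT0 : ¬ (moves G T).Nonempty :=
          fun ⟨w, hw⟩ => hS ⟨w, moves_subset_mono hST hw⟩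
        rw [gameD_eq_zero hT0, gameD_eq_zero hS]
    · -- gameS G T ≤ gameS G S
      by_cases hT : (moves G T).Nonempty
      · obtain ⟨m, hm, heq⟩ := gameS_spec hT
        have hmS : m ∈ moves G S := moves_subset_mono hST hm
        rw [heq]
        have h1 : gameD G (T ∪ N G m) ≤ gameD G (S ∪ N G m) :=
          (ih (S ∪ N G m) (T ∪ N G m)
            (by have := card_lt m hmS; omega)
            (Finset.union_subset_union hST (le_refl _))).1
        have h2 := gameS_ge hmS
        omega
      · rw [gameS_eq_zero hT]; exact Nat.zero_le _

lemma gameD_mono {S T : Finset V} (hST : S ⊆ T) : gameD G T ≤ gameD G S :=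
  (cp_aux G _ S T (le_refl _) hST).1

lemma gameS_mono {S T : Finset V} (hST : S ⊆ T) : gameS G T ≤ gameS G S :=
  (cp_aux G _ S T (le_refl _) hST).2

lemma gameS_le_gameD_add_one (S : Finset V) : gameS G S ≤ gameD G S + 1 := by
  by_cases h : (moves G S).Nonempty
  · obtain ⟨m, hm, heq⟩ := gameS_spec h
    rw [heq]
    have := gameD_mono (G := G) (Finset.subset_union_left (s₁ := S) (s₂ := N G m))
    omega
  · rw [gameS_eq_zero h]; omega

lemma gameD_le_gameS_add_one (S : Finset V) : gameD G S ≤ gameS G S + 1 := by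
  by_cases h : (moves G S).Nonempty
  · obtain ⟨m, hm⟩ := h
    have h1 := gameD_le hm
    have h2 := gameS_mono (G := G) (Finset.subset_union_left (s₁ := S) (s₂ := N G m))
    omega
  · rw [gameD_eq_zero h]; omega

end DomGame
namespace DomGame

variable {V W : Type*} [Fintype V] [Fintype W]

lemma moves_equiv {G : SimpleGraph V} {H : SimpleGraph W} (e : V ≃ W)
    (hN : ∀ v, N H (e v) = (N G v).image e) {S : Finset V} {m : V} :
    m ∈ moves G S ↔ e m ∈ moves H (S.image e) := by
  rw [mem_moves, mem_moves, hN, not_iff_not]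
  constructor
  · intro h z hz
    obtain ⟨u, hu, rfl⟩ := Finset.mem_image.mp hz
    exact Finset.mem_image_of_mem e (h hu)
  · intro h u hu
    obtain ⟨u', hu', he⟩ := Finset.mem_image.mp (h (Finset.mem_image_of_mem e hu))
    rwa [e.injective he] at hu'

lemma game_le_equiv {G : SimpleGraph V} {H : SimpleGraph W} (e : V ≃ W)
    (hN : ∀ v, N H (e v) = (N G v).image e) :
    ∀ n : ℕ, ∀ S : Finset V, (Finset.univ \ S).card ≤ n →
      gameD G S ≤ gameD H (S.image e) ∧ gameS G S ≤ gameS H (S.image e) := by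
  intro n
  induction n with
  | zero =>
    intro S hc
    have hc0 : (Finset.univ \ S : Finset V) = ∅ := Finset.card_eq_zero.mp (by omega)
    have hS : ¬ (moves G S).Nonempty := by
      rintro ⟨m, hm⟩
      obtain ⟨u, hu, hus⟩ := Finset.not_subset.mp (mem_moves.mp hm)
      have : u ∈ Finset.univ \ S := Finset.mem_sdiff.mpr ⟨Finset.mem_univ u, hus⟩
      simp [hc0] at this
    rw [gameD_eq_zero hS, gameS_eq_zero hS]
    exact ⟨Nat.zero_le _, Nat.zero_le _⟩
  | succ n ih =>
    intro S hc
    have himg : ∀ m : V, (S ∪ N G m).image e = S.image e ∪ N H (e m) := by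
      intro m; rw [Finset.image_union, hN]
    constructor
    · by_cases hS : (moves G S).Nonempty
      · have hH : (moves H (S.image e)).Nonempty :=
          ⟨e hS.choose, (moves_equiv e hN).mp hS.choose_spec⟩
        obtain ⟨m', hm', heq⟩ := gameD_spec hH
        have hm : e.symm m' ∈ moves G S := by
          rw [moves_equiv e hN, e.apply_symm_apply]; exact hm'
        calc gameD G S ≤ 1 + gameS G (S ∪ N G (e.symm m')) := gameD_le hm
          _ ≤ 1 + gameS H ((S ∪ N G (e.symm m')).image e) := by
              have := (ih (S ∪ N G (e.symm m')) (by have := card_lt _ hm; omega)).2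
              omega
          _ = gameD H (S.image e) := by
              rw [heq, himg, e.apply_symm_apply]
      · rw [gameD_eq_zero hS]; exact Nat.zero_le _
    · by_cases hS : (moves G S).Nonempty
      · obtain ⟨m, hm, heq⟩ := gameS_spec hS
        rw [heq]
        have hmH := (moves_equiv e hN).mp hm
        calc 1 + gameD G (S ∪ N G m)
            ≤ 1 + gameD H ((S ∪ N G m).image e) := by
              have := (ih (S ∪ N G m) (by have := card_lt _ hm; omega)).1
              omega
          _ ≤ gameS H (S.image e) := by rw [himg]; exact gameS_ge hmH
      · rw [gameS_eq_zero hS]; exact Nat.zero_le _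

lemma game_equiv {G : SimpleGraph V} {H : SimpleGraph W} (e : V ≃ W)
    (hN : ∀ v, N H (e v) = (N G v).image e) (S : Finset V) :
    gameD G S = gameD H (S.image e) ∧ gameS G S = gameS H (S.image e) := by
  have h1 := game_le_equiv e hN _ S (le_refl _)
  have hN' : ∀ w, N G (e.symm w) = (N H w).image e.symm := by
    intro w
    have := hN (e.symm w)
    rw [e.apply_symm_apply] at this
    rw [this, Finset.image_image]
    simp
  have h2 := game_le_equiv e.symm hN' _ (S.image e) (le_refl _)
  have himg : (S.image (e : V → W)).image (e.symm : W → V) = S := by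
    rw [Finset.image_image]; simp
  rw [himg] at h2
  exact ⟨le_antisymm h1.1 h2.1, le_antisymm h1.2 h2.2⟩

lemma N_map {G : SimpleGraph V} {H : SimpleGraph W} (e : V ≃ W)
    (hN : ∀ v u, e u ∈ N H (e v) ↔ u ∈ N G v) (v : V) :
    N H (e v) = (N G v).image e := by
  ext z
  obtain ⟨u, rfl⟩ := e.surjective z
  rw [Finset.mem_image, hN]
  constructor
  · intro h; exact ⟨u, h, rfl⟩
  · rintro ⟨a, ha, hae⟩
    rwa [e.injective hae] at ha

lemma game_equiv' {G : SimpleGraph V} {H : SimpleGraph W} (e : V ≃ W)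
    (hN : ∀ v u, e u ∈ N H (e v) ↔ u ∈ N G v) (S : Finset V) :
    gameD G S = gameD H (S.image e) ∧ gameS G S = gameS H (S.image e) :=
  game_equiv e (N_map e hN) S

end DomGame
set_option linter.unusedSectionVars false

namespace DomGame

variable {V : Type*} [Fintype V] {G' : SimpleGraph V} {x : V}

lemma addLeaf_adj_inl_inl {u w : V} :
    (addLeaf G' x).Adj (Sum.inl u) (Sum.inl w) ↔ G'.Adj u w := by
  simp only [addLeaf, SimpleGraph.fromRel_adj]
  constructor
  · rintro ⟨hne, h | h⟩
    · exact h
    · exact h.symm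
  · intro h
    exact ⟨by simpa using h.ne, Or.inl h⟩

lemma addLeaf_adj_inl_inr {u : V} {t : Unit} :
    (addLeaf G' x).Adj (Sum.inl u) (Sum.inr t) ↔ u = x := by
  simp [addLeaf, SimpleGraph.fromRel_adj]

lemma addLeaf_adj_inr_inr {t t' : Unit} :
    ¬ (addLeaf G' x).Adj (Sum.inr t) (Sum.inr t') := by
  simp [addLeaf, SimpleGraph.fromRel_adj]

lemma mem_N_addLeaf_inl_inl {u w : V} :
    Sum.inl w ∈ N (addLeaf G' x) (Sum.inl u) ↔ w ∈ N G' u := by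
  simp only [mem_N, addLeaf_adj_inl_inl, Sum.inl.injEq]

lemma mem_N_addLeaf_inl_inr {u : V} {t : Unit} :
    Sum.inr t ∈ N (addLeaf G' x) (Sum.inl u) ↔ u = x := by
  simp only [mem_N]
  constructor
  · rintro (h | h)
    · exact addLeaf_adj_inl_inr.mp h
    · exact absurd h (by simp)
  · intro h; exact Or.inl (addLeaf_adj_inl_inr.mpr h)

lemma mem_N_addLeaf_inr {z : V ⊕ Unit} {t : Unit} :
    z ∈ N (addLeaf G' x) (Sum.inr t) ↔ z = Sum.inr t ∨ z = Sum.inl x := by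
  cases z with
  | inl w =>
    simp only [mem_N, Sum.inl.injEq]
    constructor
    · rintro (h | h)
      · have : w = x := addLeaf_adj_inl_inr.mp (((addLeaf G' x).adj_comm _ _).mp h)
        simp [this]
      · simp at h
    · rintro (h | h)
      · simp at h
      · exact Or.inl (((addLeaf G' x).adj_comm _ _).mpr (addLeaf_adj_inl_inr.mpr h))
  | inr t' =>
    cases t; cases t'; simp [mem_N]

end DomGame
namespace DomGame

variable {V W : Type*} [Fintype V] [Fintype W]

/-- Preimage of a dominated set under the embedding `f`. -/
noncomputable def pre (f : V → W) (T : Finset W) : Finset V :=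
  Finset.univ.filter (fun u => f u ∈ T)

lemma mem_pre {f : V → W} {T : Finset W} {u : V} : u ∈ pre f T ↔ f u ∈ T := by
  simp [pre]

section Leaf

variable {G' : SimpleGraph V} {G : SimpleGraph W} {f : V → W} {v : W} {x : V}
  (hNf : ∀ u w : V, f w ∈ N G (f u) ↔ w ∈ N G' u)
  (hcov : ∀ z : W, z = v ∨ ∃ u, z = f u)
  (hNv : ∀ z : W, z ∈ N G v ↔ z = v ∨ z = f x)
  (hvNf : ∀ u : V, v ∈ N G (f u) ↔ u = x)
  (hvr : ∀ u : V, f u ≠ v)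
  (hinj : Function.Injective f)

include hNf in
lemma pre_union_Nf (T : Finset W) (u : V) :
    pre f (T ∪ N G (f u)) = pre f T ∪ N G' u := by
  ext w
  simp only [mem_pre, Finset.mem_union, mem_pre, hNf]

include hNv hvr hinj in
lemma pre_union_Nv (T : Finset W) :
    pre f (T ∪ N G v) = pre f T ∪ {x} := by
  ext w
  simp only [mem_pre, Finset.mem_union, Finset.mem_singleton, hNv]
  constructor
  · rintro (h | h | h)
    · exact Or.inl h
    · exact absurd h (hvr w)
    · exact Or.inr (hinj h)
  · rintro (h | h)
    · exact Or.inl h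
    · subst h; right; right; rfl

include hNf in
lemma moves_f_of_moves {T : Finset W} {u : V}
    (hu : u ∈ moves G' (pre f T)) : f u ∈ moves G T := by
  rw [mem_moves] at hu ⊢
  obtain ⟨w, hw, hws⟩ := Finset.not_subset.mp hu
  exact Finset.not_subset.mpr ⟨f w, (hNf u w).mpr hw, fun h => hws (mem_pre.mpr h)⟩

include hNf hcov in
lemma moves_of_moves_f {T : Finset W} {u : V}
    (hT : v ∈ T) (hu : f u ∈ moves G T) : u ∈ moves G' (pre f T) := by
  rw [mem_moves] at hu ⊢
  obtain ⟨z, hz, hzs⟩ := Finset.not_subset.mp hu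
  rcases hcov z with rfl | ⟨w, rfl⟩
  · exact absurd hT hzs
  · exact Finset.not_subset.mpr ⟨w, (hNf u w).mp hz, fun h => hzs (mem_pre.mp h)⟩

include hNv in
lemma moves_v {T : Finset W}
    (hu : v ∈ moves G T) : v ∉ T ∨ f x ∉ T := by
  rw [mem_moves] at hu
  by_contra h
  push_neg at h
  refine hu ?_
  intro z hz
  rcases (hNv z).mp hz with rfl | rfl
  · exact h.1
  · exact h.2

include hNf hcov hNv hvr hinj in
/-- Lower bound: the game on `G` (the graph with a pendant leaf `v` attached
at `f x`) lasts at least as long as the game on `G'`. -/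
lemma claimC :
    ∀ n : ℕ, ∀ T : Finset W, (Finset.univ \ T).card ≤ n →
      gameD G' (pre f T) ≤ gameD G T ∧
      gameS G' (pre f T) ≤ gameS G T := by
  intro n
  induction n with
  | zero =>
    intro T hc
    have hc0 : (Finset.univ \ T : Finset W) = ∅ := Finset.card_eq_zero.mp (by omega)
    have hTuniv : ∀ z : W, z ∈ T := by
      intro z
      by_contra hz
      have : z ∈ Finset.univ \ T := Finset.mem_sdiff.mpr ⟨Finset.mem_univ z, hz⟩
      simp [hc0] at this
    have hS : ¬ (moves G' (pre f T)).Nonempty := by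
      rintro ⟨m, hm⟩
      obtain ⟨u, _, hus⟩ := Finset.not_subset.mp (mem_moves.mp hm)
      exact hus (mem_pre.mpr (hTuniv _))
    rw [gameD_eq_zero hS, gameS_eq_zero hS]
    exact ⟨Nat.zero_le _, Nat.zero_le _⟩
  | succ n ih =>
    intro T hc
    constructor
    · by_cases hT : (moves G T).Nonempty
      · obtain ⟨m, hm, heq⟩ := gameD_spec hT
        rw [heq]
        have hcard := card_lt m hm
        rcases hcov m with rfl | ⟨u, rfl⟩
        · -- Dominator plays the leaf `v`
          have ihS := (ih (T ∪ N G m) (by omega)).2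
          rw [pre_union_Nv hNv hvr hinj] at ihS
          by_cases hx : x ∈ pre f T
          · have hpre : pre f T ∪ {x} = pre f T := by
              apply Finset.union_eq_left.mpr; simpa using hx
            rw [hpre] at ihS
            have := gameD_le_gameS_add_one (G := G') (pre f T)
            omega
          · have hxm : x ∈ moves G' (pre f T) := by
              rw [mem_moves]
              exact Finset.not_subset.mpr ⟨x, self_mem_N x, hx⟩
            have h1 := gameD_le hxm
            have h2 : gameS G' (pre f T ∪ N G' x) ≤ gameS G' (pre f T ∪ {x}) := by
              apply gameS_mono
              apply Finset.union_subset_union (le_refl _)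
              simpa using self_mem_N (G := G') x
            omega
        · -- Dominator plays `f u`
          have ihS := (ih (T ∪ N G (f u)) (by omega)).2
          rw [pre_union_Nf hNf] at ihS
          by_cases hu : u ∈ moves G' (pre f T)
          · have := gameD_le hu
            omega
          · have hNu : N G' u ⊆ pre f T := by rwa [mem_moves, not_not] at hu
            have hpre : pre f T ∪ N G' u = pre f T := Finset.union_eq_left.mpr hNu
            rw [hpre] at ihS
            have := gameD_le_gameS_add_one (G := G') (pre f T)
            omega
      · have hS : ¬ (moves G' (pre f T)).Nonempty := by
          rintro ⟨m, hm⟩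
          exact hT ⟨f m, moves_f_of_moves hNf hm⟩
        rw [gameD_eq_zero hS, gameD_eq_zero hT]
    · by_cases hS : (moves G' (pre f T)).Nonempty
      · obtain ⟨m, hm, heq⟩ := gameS_spec hS
        rw [heq]
        have hmG : f m ∈ moves G T := moves_f_of_moves hNf hm
        have hcard := card_lt _ hmG
        have ihD := (ih (T ∪ N G (f m)) (by omega)).1
        rw [pre_union_Nf hNf] at ihD
        have := gameS_ge hmG
        omega
      · rw [gameS_eq_zero hS]; exact Nat.zero_le _

include hNf hcov hNv in
/-- Upper bound when the leaf and its support are already dominated. -/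
lemma claimA :
    ∀ n : ℕ, ∀ T : Finset W, (Finset.univ \ T).card ≤ n →
      v ∈ T → f x ∈ T →
      gameD G T ≤ gameD G' (pre f T) ∧
      gameS G T ≤ gameS G' (pre f T) := by
  intro n
  induction n with
  | zero =>
    intro T hc hv hxT
    have hc0 : (Finset.univ \ T : Finset W) = ∅ := Finset.card_eq_zero.mp (by omega)
    have hT : ¬ (moves G T).Nonempty := by
      rintro ⟨m, hm⟩
      obtain ⟨z, _, hzs⟩ := Finset.not_subset.mp (mem_moves.mp hm)
      have : z ∈ Finset.univ \ T := Finset.mem_sdiff.mpr ⟨Finset.mem_univ z, hzs⟩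
      simp [hc0] at this
    rw [gameD_eq_zero hT, gameS_eq_zero hT]
    exact ⟨Nat.zero_le _, Nat.zero_le _⟩
  | succ n ih =>
    intro T hc hv hxT
    have hmove : ∀ m ∈ moves G T, ∃ u, m = f u ∧ u ∈ moves G' (pre f T) := by
      intro m hm
      rcases hcov m with rfl | ⟨u, rfl⟩
      · rcases moves_v hNv hm with h | h
        · exact absurd hv h
        · exact absurd hxT h
      · exact ⟨u, rfl, moves_of_moves_f hNf hcov hv hm⟩
    constructor
    · by_cases hS : (moves G' (pre f T)).Nonempty
      · obtain ⟨m, hm, heq⟩ := gameD_spec hS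
        rw [heq]
        have hmG : f m ∈ moves G T := moves_f_of_moves hNf hm
        have hcard := card_lt _ hmG
        have ihS := (ih (T ∪ N G (f m)) (by omega)
          (Finset.mem_union_left _ hv) (Finset.mem_union_left _ hxT)).2
        rw [pre_union_Nf hNf] at ihS
        have := gameD_le hmG
        omega
      · have hT : ¬ (moves G T).Nonempty := by
          rintro ⟨m, hm⟩
          obtain ⟨u, rfl, hu⟩ := hmove m hm
          exact hS ⟨u, hu⟩
        rw [gameD_eq_zero hT]; exact Nat.zero_le _
    · by_cases hT : (moves G T).Nonempty
      · obtain ⟨m, hm, heq⟩ := gameS_spec hT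
        rw [heq]
        obtain ⟨u, rfl, hu⟩ := hmove m hm
        have hcard := card_lt _ hm
        have ihD := (ih (T ∪ N G (f u)) (by omega)
          (Finset.mem_union_left _ hv) (Finset.mem_union_left _ hxT)).1
        rw [pre_union_Nf hNf] at ihD
        have := gameS_ge hu
        omega
      · rw [gameS_eq_zero hT]; exact Nat.zero_le _

end Leaf

end DomGame
/-- If `x` is an optimal first move for Dominator in the Dominator-start game
on `G'` (i.e. playing `x` first achieves `γ_g(G')`) and `G` is obtained from
`G'` by attaching a pendant leaf `v` to `x`, then
`γ_g(G) = γ_g(G') = γ_g(G−v)`. -/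
theorem gameD_add_leaf {V : Type*} [Fintype V] (G' : SimpleGraph V) (x : V)
    (hx : gammaG G' = 1 + gameS G' (N G' x)) :
    gammaG (addLeaf G' x) = gammaG G' ∧
    gammaG ((addLeaf G' x).induce {(Sum.inr () : V ⊕ Unit)}ᶜ) = gammaG G' := by
  set G := addLeaf G' x with hGdef
  have hNf : ∀ u w : V, Sum.inl w ∈ N G (Sum.inl u) ↔ w ∈ N G' u :=
    fun u w => mem_N_addLeaf_inl_inl
  have hcov : ∀ z : V ⊕ Unit, z = Sum.inr () ∨ ∃ u, z = Sum.inl u := by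
    rintro (u | t)
    · exact Or.inr ⟨u, rfl⟩
    · cases t; exact Or.inl rfl
  have hNv : ∀ z : V ⊕ Unit, z ∈ N G (Sum.inr ()) ↔ z = Sum.inr () ∨ z = Sum.inl x :=
    fun z => mem_N_addLeaf_inr
  have hvr : ∀ u : V, (Sum.inl u : V ⊕ Unit) ≠ Sum.inr () := by simp
  have hinj : Function.Injective (Sum.inl : V → V ⊕ Unit) := Sum.inl_injective
  constructor
  · -- γ_g(G) = γ_g(G')
    apply le_antisymm
    · -- upper bound: Dominator starts with `x`
      have hm : (Sum.inl x : V ⊕ Unit) ∈ moves G ∅ := by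
        rw [mem_moves]
        exact Finset.not_subset.mpr ⟨Sum.inl x, self_mem_N _, Finset.notMem_empty _⟩
      have h1 := gameD_le hm
      set T₀ : Finset (V ⊕ Unit) := ∅ ∪ N G (Sum.inl x) with hT₀
      have hv : (Sum.inr () : V ⊕ Unit) ∈ T₀ :=
        Finset.mem_union_right _ (mem_N_addLeaf_inl_inr.mpr rfl)
      have hx' : (Sum.inl x : V ⊕ Unit) ∈ T₀ :=
        Finset.mem_union_right _ (self_mem_N _)
      have h2 := (claimA hNf hcov hNv _ T₀ (le_refl _) hv hx').2
      have hpre : pre Sum.inl T₀ = N G' x := by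
        ext u
        rw [mem_pre, hT₀]
        simp only [Finset.mem_union, Finset.notMem_empty, false_or]
        exact hNf x u
      rw [hpre] at h2
      calc gammaG G = gameD G ∅ := rfl
        _ ≤ 1 + gameS G T₀ := h1
        _ ≤ 1 + gameS G' (N G' x) := by omega
        _ = gammaG G' := hx.symm
    · -- lower bound
      have h := (claimC hNf hcov hNv hvr hinj _ (∅ : Finset (V ⊕ Unit)) (le_refl _)).1
      have hpre : pre (Sum.inl : V → V ⊕ Unit) ∅ = ∅ := by
        ext u; simp [mem_pre]
      rw [hpre] at h
      exact h
  · -- the deleted-leaf graph is isomorphic to `G'`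
    set H := G.induce {(Sum.inr () : V ⊕ Unit)}ᶜ with hHdef
    let e : V ≃ ({(Sum.inr () : V ⊕ Unit)}ᶜ : Set (V ⊕ Unit)) :=
      { toFun := fun u => ⟨Sum.inl u, by simp⟩
        invFun := fun z => Sum.elim id (fun _ => x) z.1
        left_inv := fun u => rfl
        right_inv := by
          rintro ⟨z, hz⟩
          rcases hcov z with rfl | ⟨u, rfl⟩
          · simp at hz
          · rfl }
    have e_val : ∀ u : V,
        ((e u : ({(Sum.inr () : V ⊕ Unit)}ᶜ : Set (V ⊕ Unit))) : V ⊕ Unit)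
          = Sum.inl u := fun u => rfl
    have hadj : ∀ a b : ({(Sum.inr () : V ⊕ Unit)}ᶜ : Set (V ⊕ Unit)),
        H.Adj a b ↔ G.Adj a.1 b.1 := fun a b => Iff.rfl
    have key := (game_equiv' (G := G') (H := H) e (fun u w => by
      rw [mem_N, mem_N]
      constructor
      · rintro (h | h)
        · rw [hadj, e_val, e_val] at h
          exact Or.inl (addLeaf_adj_inl_inl.mp h)
        · exact Or.inr (hinj (by rw [← e_val w, ← e_val u, h]))
      · rintro (h | h)
        · refine Or.inl ?_
          rw [hadj, e_val, e_val]
          exact addLeaf_adj_inl_inl.mpr h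
        · subst h
          exact Or.inr rfl) ∅).1
    have himg := fun (i : DecidableEq ({(Sum.inr () : V ⊕ Unit)}ᶜ : Set (V ⊕ Unit))) =>
      @Finset.image_empty V _ i ⇑e
    rw [himg] at key
    exact key.symm
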